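/- For every integer e ≥ 2, ν_2(f(2^e - 2)) = -(e-1), where f(n) = ∑_{k=0}^{n} C(n,k)^{-1}. -/

import Mathlib

open Finset

def f (n : ℕ) : ℚ := ∑ k ∈ Finset.range (n + 1), ((n.choose k : ℚ))⁻¹

lemma f_pos (n : ℕ) : 0 < f n := by
  apply Finset.sum_pos
  · intro k hk
    rw [mem_range] at hk
    have : 0 < n.choose k := Nat.choose_pos (by omega)
    positivity
  · exact ⟨0, by simp⟩

lemma nat_key2 (n k : ℕ) : (n+1) * n.choose k = (n+1).choose (k+1) * (k+1) :=
  Nat.add_one_mul_choose_eq n k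

lemma nat_key1 (n k : ℕ) (h : k ≤ n) :
    (n+1) * n.choose k = (n+1).choose k * (n+1-k) := by
  have h1 : n.choose k = n.choose (n-k) := (Nat.choose_symm h).symm
  have h2 := nat_key2 n (n-k)
  have h3 : (n+1).choose (n-k+1) = (n+1).choose k := by
    rw [← Nat.choose_symm (by omega : k ≤ n+1)]
    congr 1
    omega
  rw [h1, h2, h3]
  congr 1
  omega

lemma f_rec (n : ℕ) : f (n+1) = ((n:ℚ)+2)/(2*((n:ℚ)+1)) * f n + 1 := by
  have hn1 : ((n:ℚ)+1) ≠ 0 := by positivity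
  have S_def : f (n+1) = (∑ k ∈ range (n+1), (((n+1).choose k : ℚ))⁻¹) + 1 := by
    rw [f, Finset.sum_range_succ, Nat.choose_self]
    norm_num
  have hA : (∑ k ∈ range (n+1), (((n+1).choose k : ℚ))⁻¹)
      = ∑ k ∈ range (n+1), ((n+1-k : ℕ) : ℚ) / (((n:ℚ)+1) * (n.choose k : ℚ)) := by
    refine Finset.sum_congr rfl fun k hk => ?_
    rw [mem_range] at hk
    have hk' : k ≤ n := by omega
    have h1 : (0:ℚ) < ((n+1).choose k : ℚ) := by
      exact_mod_cast Nat.choose_pos (by omega : k ≤ n+1)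
    have h2 : (0:ℚ) < (n.choose k : ℚ) := by exact_mod_cast Nat.choose_pos hk'
    have key := nat_key1 n k hk'
    have keyQ : ((n:ℚ)+1) * (n.choose k : ℚ) = ((n+1).choose k : ℚ) * ((n+1-k : ℕ) : ℚ) := by
      exact_mod_cast congrArg (Nat.cast : ℕ → ℚ) key
    have h3 : (0:ℚ) < ((n+1-k : ℕ) : ℚ) := by
      have : 0 < n+1-k := by omega
      exact_mod_cast this
    push_cast at keyQ
    field_simp
    rw [mul_comm] at keyQ
    linarith [keyQ]
  have hB : (∑ k ∈ range (n+1), (((n+1).choose k : ℚ))⁻¹)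
      = ∑ k ∈ range (n+1), ((k+1 : ℕ) : ℚ) / (((n:ℚ)+1) * (n.choose k : ℚ)) := by
    rw [← Finset.sum_range_reflect (fun k => (((n+1).choose k : ℚ))⁻¹) (n+1)]
    refine Finset.sum_congr rfl fun k hk => ?_
    rw [mem_range] at hk
    have hk' : k ≤ n := by omega
    have hsymm : (n+1).choose (n+1 - (k+1)) = (n+1).choose (k+1) := Nat.choose_symm (by omega)
    have hred : n + 1 - 1 - k = n + 1 - (k+1) := by omega
    rw [hred, hsymm]
    have h1 : (0:ℚ) < ((n+1).choose (k+1) : ℚ) := by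
      exact_mod_cast Nat.choose_pos (by omega : k+1 ≤ n+1)
    have h2 : (0:ℚ) < (n.choose k : ℚ) := by exact_mod_cast Nat.choose_pos hk'
    have key := nat_key2 n k
    have keyQ : ((n:ℚ)+1) * (n.choose k : ℚ) = ((n+1).choose (k+1) : ℚ) * ((k+1 : ℕ) : ℚ) := by
      exact_mod_cast congrArg (Nat.cast : ℕ → ℚ) key
    have h3 : (0:ℚ) < ((k+1 : ℕ) : ℚ) := by positivity
    push_cast at keyQ
    field_simp
    rw [mul_comm] at keyQ
    push_cast
    linarith [keyQ]
  have h2S : 2 * (∑ k ∈ range (n+1), (((n+1).choose k : ℚ))⁻¹)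
      = ((n:ℚ)+2)/((n:ℚ)+1) * f n := by
    rw [two_mul]
    nth_rewrite 1 [hA]
    nth_rewrite 1 [hB]
    rw [← Finset.sum_add_distrib, f, Finset.mul_sum]
    refine Finset.sum_congr rfl fun k hk => ?_
    rw [mem_range] at hk
    have hk' : k ≤ n := by omega
    have h2 : (0:ℚ) < (n.choose k : ℚ) := by exact_mod_cast Nat.choose_pos hk'
    have hcast : ((n+1-k : ℕ) : ℚ) = (n:ℚ) + 1 - k := by
      have : (n+1-k : ℕ) = (n + 1) - k := rfl
      push_cast [Nat.cast_sub (by omega : k ≤ n+1)]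
      ring
    rw [hcast]
    push_cast
    field_simp
    ring
  rw [S_def]
  have := h2S
  field_simp at this ⊢
  linarith [this]

def S2 (m : ℕ) : ℚ := ∑ k ∈ Finset.range m, (2:ℚ)^(k+1) / ((k+1 : ℕ) : ℚ)

lemma S2_pos (m : ℕ) (hm : 1 ≤ m) : 0 < S2 m := by
  apply Finset.sum_pos
  · intro k _
    positivity
  · exact ⟨0, by simp; omega⟩

lemma a_eq (n : ℕ) : ((n+1 : ℕ) : ℚ) * S2 (n+1) = 2^(n+1) * f n := by
  induction n with
  | zero => simp [S2, f]
  | succ n ih =>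
    have hn1 : ((n:ℚ)+1) ≠ 0 := by positivity
    have hn2 : ((n:ℚ)+2) ≠ 0 := by positivity
    rw [S2, Finset.sum_range_succ, ← S2, f_rec n]
    rw [S2, ← S2] at ih
    push_cast at ih ⊢
    field_simp at ih ⊢
    linear_combination (2*(n:ℚ)+4) * ih

lemma val_le_sum {c : ℤ} {F : ℕ → ℚ} {S : Finset ℕ}
    (h : ∀ i ∈ S, c ≤ padicValRat 2 (F i)) (hs : ∑ i ∈ S, F i ≠ 0) :
    c ≤ padicValRat 2 (∑ i ∈ S, F i) := by
  classical
  induction S using Finset.cons_induction with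
  | empty => simp at hs
  | cons a s ha ih =>
    rw [Finset.sum_cons] at hs ⊢
    by_cases h0 : ∑ i ∈ s, F i = 0
    · rw [h0, add_zero]
      exact h a (Finset.mem_cons_self a s)
    · by_cases h1 : F a = 0
      · rw [h1, zero_add] at hs ⊢
        exact ih (fun i hi => h i (Finset.mem_cons_of_mem hi)) hs
      · refine le_trans (le_min (h a (Finset.mem_cons_self a s))
          (ih (fun i hi => h i (Finset.mem_cons_of_mem hi)) h0)) ?_
        exact padicValRat.min_le_padicValRat_add hs

lemma val_f_ge (n : ℕ) : -(Nat.log 2 n : ℤ) ≤ padicValRat 2 (f n) := by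
  rw [f]
  apply val_le_sum
  · intro k hk
    rw [Finset.mem_range] at hk
    have hpos : 0 < n.choose k := Nat.choose_pos (by omega)
    rw [show ((n.choose k : ℚ)) = ((n.choose k : ℕ) : ℚ) from rfl, padicValRat.inv,
      padicValRat.of_nat, neg_le_neg_iff]
    have h1 : padicValNat 2 (n.choose k) = (n.choose k).factorization 2 :=
      (Nat.factorization_def _ Nat.prime_two).symm
    rw [h1]
    exact_mod_cast Nat.factorization_choose_le_log
  · exact (f_pos n).ne'

lemma val_term (k : ℕ) :
    padicValRat 2 ((2:ℚ)^(k+1) / ((k+1 : ℕ) : ℚ)) = (k+1 : ℤ) - padicValNat 2 (k+1) := by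
  have h1 : ((2:ℚ)^(k+1)) ≠ 0 := by positivity
  have h2 : (((k+1:ℕ)) : ℚ) ≠ 0 := by positivity
  rw [padicValRat.div h1 h2, padicValRat.pow (2:ℚ),
    show ((2:ℚ)) = ((2:ℕ):ℚ) from rfl, padicValRat.self (by norm_num), padicValRat.of_nat]
  push_cast
  ring

lemma two_pow_sub_mono : ∀ {i j : ℕ}, i ≤ j → (2^i : ℤ) - i ≤ 2^j - j := by
  intro i j h
  induction j, h using Nat.le_induction with
  | base => exact le_refl _
  | succ j hij ih =>
    have h1 : (1:ℤ) ≤ 2^j := one_le_pow₀ (by norm_num)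
    have h2 : (2:ℤ)^(j+1) = 2 * 2^j := by ring
    push_cast
    push_cast at ih
    linarith

lemma nat_bound (e k : ℕ) (he : 1 ≤ e) (hk : 2^e < k) :
    (2^e : ℤ) - e + 1 ≤ (k:ℤ) - padicValNat 2 k := by
  set j := padicValNat 2 k with hj
  have hk0 : k ≠ 0 := Nat.ne_zero_of_lt hk
  have hdvd : 2^j ∣ k := pow_padicValNat_dvd
  have hle : 2^j ≤ k := Nat.le_of_dvd (Nat.pos_of_ne_zero hk0) hdvd
  by_cases hc : j ≤ e
  · have h1 : (2:ℤ)^e < (k:ℤ) := by exact_mod_cast hk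
    have h2 : (j:ℤ) ≤ (e:ℤ) := by exact_mod_cast hc
    linarith
  · push_neg at hc
    have h1 : (2^(e+1) : ℤ) - (e+1) ≤ (2^j : ℤ) - j := two_pow_sub_mono hc
    have h2 : (2^j : ℤ) ≤ (k:ℤ) := by exact_mod_cast hle
    have h3 : (2:ℤ)^(e+1) = 2 * 2^e := by ring
    have h4 : (2:ℤ) ≤ 2^e := by
      calc (2:ℤ) = 2^1 := by norm_num
      _ ≤ 2^e := pow_le_pow_right₀ (by norm_num) he
    linarith

lemma val_two_pow (t : ℕ) : padicValRat 2 ((2:ℚ)^t) = t := by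
  rw [padicValRat.pow (2:ℚ),
    show ((2:ℚ)) = ((2:ℕ):ℚ) from rfl, padicValRat.self (by norm_num)]
  ring

lemma val_S2_pow (E : ℕ) (hE : 1 ≤ E) :
    (2^E : ℤ) - 2*E ≤ padicValRat 2 (S2 (2^E)) := by
  have hN1 : 1 ≤ 2^E := Nat.one_le_two_pow
  have hsub : 2^E - 1 + 1 = 2^E := by omega
  have hfne : f (2^E - 1) ≠ 0 := (f_pos _).ne'
  have hS2ne : S2 (2^E) ≠ 0 := (S2_pos _ hN1).ne'
  have hNQ : ((2^E : ℕ):ℚ) ≠ 0 := by positivity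
  have h2N : ((2:ℚ)^(2^E)) ≠ 0 := by positivity
  have heq : ((2^E : ℕ):ℚ) * S2 (2^E) = 2^(2^E) * f (2^E - 1) := by
    have := a_eq (2^E - 1)
    rwa [hsub] at this
  have hv := congrArg (padicValRat 2) heq
  rw [padicValRat.mul hNQ hS2ne, padicValRat.mul h2N hfne, padicValRat.of_nat,
    padicValNat.prime_pow, val_two_pow] at hv
  have hlog : Nat.log 2 (2^E - 1) ≤ E := by
    calc Nat.log 2 (2^E - 1) ≤ Nat.log 2 (2^E) := Nat.log_mono_right (by omega)
    _ = E := Nat.log_pow (by norm_num : 1 < 2) E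
  have hf := val_f_ge (2^E - 1)
  have hlog' : (Nat.log 2 (2^E - 1) : ℤ) ≤ (E:ℤ) := by exact_mod_cast hlog
  have hEpow : ((2^E : ℕ) : ℤ) = (2:ℤ)^E := by push_cast; ring
  omega

lemma val_S2_main (e : ℕ) (he : 2 ≤ e) :
    padicValRat 2 (S2 (2^e - 1)) = (2^e : ℤ) - e := by
  have hpe : 4 ≤ 2^e := by
    calc (4:ℕ) = 2^2 := by norm_num
    _ ≤ 2^e := Nat.pow_le_pow_right (by norm_num) he
  set m := 2^e - 1 with hm
  set N := 2^(e+2) with hN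
  have hmN : m + 1 < N := by
    have : 2^e < 2^(e+2) := Nat.pow_lt_pow_right (by norm_num) (by omega)
    omega
  have hm1 : m + 1 = 2^e := by omega
  set t : ℕ → ℚ := fun k => (2:ℚ)^(k+1) / ((k+1 : ℕ) : ℚ) with ht
  have htpos : ∀ k, 0 < t k := by
    intro k
    rw [ht]
    have : (0:ℚ) < ((k+1:ℕ):ℚ) := by positivity
    positivity
  have hsplit : S2 m + ∑ k ∈ Finset.Ico m N, t k = S2 N := by
    rw [S2, S2]
    exact Finset.sum_range_add_sum_Ico t (by omega)
  have hsum2 : ∑ k ∈ Finset.Ico m N, t k = t m + ∑ k ∈ Finset.Ico (m+1) N, t k :=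
    Finset.sum_eq_sum_Ico_succ_bot (by omega) t
  set T := ∑ k ∈ Finset.Ico (m+1) N, t k with hT
  have hTpos : 0 < T := by
    apply Finset.sum_pos (fun k _ => htpos k)
    exact ⟨m+1, Finset.mem_Ico.mpr ⟨le_refl _, hmN⟩⟩
  have hTval : (2^e:ℤ) - e + 1 ≤ padicValRat 2 T := by
    apply val_le_sum
    · intro i hi
      rw [Finset.mem_Ico] at hi
      rw [ht]
      rw [val_term i]
      have := nat_bound e (i+1) (by omega) (by omega)
      omega
    · exact hTpos.ne'
  have htm : padicValRat 2 (t m) = (2^e:ℤ) - e := by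
    rw [ht, val_term m]
    have h1 : padicValNat 2 (m+1) = e := by rw [hm1]; exact padicValNat.prime_pow e
    rw [h1]
    have : ((m:ℤ)+1) = (2^e : ℤ) := by exact_mod_cast congrArg (Nat.cast : ℕ → ℤ) hm1
    omega
  have hSN : (2^e:ℤ) - e + 1 ≤ padicValRat 2 (S2 N) := by
    have h1 := val_S2_pow (e+2) (by omega)
    have h2 : ((e:ℤ)+1) ≤ 2^e := by exact_mod_cast Nat.lt_two_pow_self (n := e)
    have h3 : (2:ℤ)^(e+2) = 4 * 2^e := by ring
    have h4 : (2:ℤ) ≤ (e:ℤ) := by exact_mod_cast he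
    rw [← hN] at h1
    push_cast at h1
    linarith
  have hSm : S2 m = -t m + (S2 N - T) := by
    rw [hsum2] at hsplit
    linarith
  have hSmpos : 0 < S2 m := S2_pos m (by omega)
  by_cases hX : S2 N - T = 0
  · rw [hX, add_zero] at hSm
    rw [hSm, padicValRat.neg, htm]
  · have hXval : (2^e:ℤ) - e + 1 ≤ padicValRat 2 (S2 N - T) := by
      have hne : S2 N + -T ≠ 0 := by rw [← sub_eq_add_neg]; exact hX
      have := padicValRat.min_le_padicValRat_add (p := 2) hne
      rw [← sub_eq_add_neg] at this
      rw [padicValRat.neg] at this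
      calc (2^e:ℤ) - e + 1 ≤ min (padicValRat 2 (S2 N)) (padicValRat 2 T) :=
        le_min hSN hTval
      _ ≤ _ := this
    rw [hSm, padicValRat.add_eq_of_lt (by rw [← hSm]; exact hSmpos.ne')
      (by simpa using (htpos m).ne') hX (by rw [padicValRat.neg, htm]; omega),
      padicValRat.neg, htm]

theorem stmt_18 (e : ℕ) (he : 2 ≤ e) :
    padicValRat 2 (f (2 ^ e - 2)) = -((e : ℤ) - 1) := by
  have hpe : 4 ≤ 2^e := by
    calc (4:ℕ) = 2^2 := by norm_num
    _ ≤ 2^e := Nat.pow_le_pow_right (by norm_num) he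
  set n := 2^e - 2 with hn
  have hn1 : n + 1 = 2^e - 1 := by omega
  have heq : ((n+1 : ℕ):ℚ) * S2 (n+1) = 2^(n+1) * f n := a_eq n
  have hfne : f n ≠ 0 := (f_pos n).ne'
  have hS2ne : S2 (n+1) ≠ 0 := (S2_pos _ (by omega)).ne'
  have hNQ : ((n+1 : ℕ):ℚ) ≠ 0 := by positivity
  have h2N : ((2:ℚ)^(n+1)) ≠ 0 := by positivity
  have hv := congrArg (padicValRat 2) heq
  rw [padicValRat.mul hNQ hS2ne, padicValRat.mul h2N hfne, padicValRat.of_nat,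
    val_two_pow] at hv
  have hodd : padicValNat 2 (n+1) = 0 := by
    apply padicValNat.eq_zero_of_not_dvd
    have : 2 ∣ 2^e := dvd_pow_self 2 (by omega : e ≠ 0)
    omega
  have hval2 : padicValRat 2 (S2 (n+1)) = (2^e:ℤ) - e := by
    rw [hn1]; exact val_S2_main e he
  rw [hodd, hval2] at hv
  have hcast : ((n+1 : ℕ):ℤ) = (2^e : ℤ) - 1 := by
    rw [hn1]
    have : ((2^e - 1 : ℕ):ℤ) = ((2^e : ℕ):ℤ) - 1 := by
      rw [Nat.cast_sub (by omega)]; norm_num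
    rw [this]; push_cast; ring
  rw [hcast] at hv
  omega
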